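/- arXiv:1810.09132 — 4 statements merged into one kernel-verified Lean document; each statement's English description precedes it below -/
import Mathlib

section
/- Let Σ be a finite set of modes. Suppose that for every j ∈ Σ: (i) the design LMI matrix M_j is positive definite; (ii) P B¹_j = B¹_j V_j where V_j ∈ ℝ^{m×m} is invertible; and set the output-feedback gain K_j = V_j⁻¹ U_j. Then for every j ∈ Σ the closed-loop dissipation matrix Γ_j formed with Â_j = A_j + B¹_j H + B¹_j K_j C_j and B̂_j = B²_j + B¹_j K_j D_j is positive definite; equivalently, the closed-loop linearized switched system in every mode is QSR-state strictly input dissipative with the common quadratic storage function V(x) = x'Px. -/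
open Matrix

lemma posDef_conj_transpose {a b : Type*} [Fintype a] [Fintype b]
    {M : Matrix a a ℝ} (hM : M.PosDef) (T : Matrix a b ℝ)
    (hT : Function.Injective T.mulVec) : (Tᵀ * M * T).PosDef := by
  refine Matrix.PosDef.of_dotProduct_mulVec_pos ?_ ?_
  · have h := Matrix.isHermitian_conjTranspose_mul_mul T hM.1
    simpa using h
  · intro x hx
    have hTx : T *ᵥ x ≠ 0 := fun h => hx (hT (by simpa using h))
    have := hM.dotProduct_mulVec_pos hTx
    have e : x ᵥ* (Tᵀ * M * T) = (T *ᵥ x) ᵥ* (M * T) := by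
      rw [Matrix.mul_assoc, ← Matrix.vecMul_vecMul, Matrix.vecMul_transpose]
    simpa [star_mulVec, dotProduct_mulVec, vecMul_vecMul, e] using this

/-- The closed-loop dissipation matrix Γ: a symmetric 2×2 block matrix with blocks
Γ₁₁ = C'QC − PÂ − Â'P, Γ₁₂ = C'QD + C'S − PB̂, Γ₂₂ = D'QD + D'S + S'D + R. -/
noncomputable def dissipationMatrix {n p q : ℕ}
    (P Ahat : Matrix (Fin n) (Fin n) ℝ) (Bhat : Matrix (Fin n) (Fin p) ℝ)
    (C : Matrix (Fin q) (Fin n) ℝ) (D : Matrix (Fin q) (Fin p) ℝ)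
    (Q : Matrix (Fin q) (Fin q) ℝ) (S : Matrix (Fin q) (Fin p) ℝ)
    (R : Matrix (Fin p) (Fin p) ℝ) :
    Matrix (Fin n ⊕ Fin p) (Fin n ⊕ Fin p) ℝ :=
  Matrix.fromBlocks
    (Cᵀ * Q * C - P * Ahat - Ahatᵀ * P)
    (Cᵀ * Q * D + Cᵀ * S - P * Bhat)
    ((Cᵀ * Q * D + Cᵀ * S - P * Bhat)ᵀ)
    (Dᵀ * Q * D + Dᵀ * S + Sᵀ * D + R)

/-- The design LMI matrix M: a symmetric 3×3 block matrix with blocks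
M₁₁ = −P(A + B¹H) − (A + B¹H)'P − B¹UC − C'U'(B¹)', M₁₂ = −PB² − B¹UD + C'S,
M₁₃ = −C'L, M₂₂ = D'S + S'D + R, M₂₃ = −D'L, M₃₃ = I, where L is symmetric
with LL = −Q. -/
noncomputable def designLMI {n m p q : ℕ}
    (P A : Matrix (Fin n) (Fin n) ℝ) (B1 : Matrix (Fin n) (Fin m) ℝ)
    (B2 : Matrix (Fin n) (Fin p) ℝ) (C : Matrix (Fin q) (Fin n) ℝ)
    (D : Matrix (Fin q) (Fin p) ℝ) (H : Matrix (Fin m) (Fin n) ℝ)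
    (U : Matrix (Fin m) (Fin q) ℝ) (S : Matrix (Fin q) (Fin p) ℝ)
    (R : Matrix (Fin p) (Fin p) ℝ) (L : Matrix (Fin q) (Fin q) ℝ) :
    Matrix (Fin n ⊕ (Fin p ⊕ Fin q)) (Fin n ⊕ (Fin p ⊕ Fin q)) ℝ :=
  Matrix.fromBlocks
    (-(P * (A + B1 * H)) - (A + B1 * H)ᵀ * P - B1 * U * C - Cᵀ * Uᵀ * B1ᵀ)
    (Matrix.fromCols (-(P * B2) - B1 * U * D + Cᵀ * S) (-(Cᵀ * L)))
    (Matrix.fromRows ((-(P * B2) - B1 * U * D + Cᵀ * S)ᵀ) ((-(Cᵀ * L))ᵀ))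
    (Matrix.fromBlocks (Dᵀ * S + Sᵀ * D + R) (-(Dᵀ * L)) ((-(Dᵀ * L))ᵀ) 1)

/-- If for every mode j the design LMI matrix M_j is positive
definite and P B¹_j = B¹_j V_j with V_j invertible, then with the gain
K_j = V_j⁻¹ U_j, the closed-loop dissipation matrix Γ_j built from
Â_j = A_j + B¹_jH + B¹_jK_jC_j and B̂_j = B²_j + B¹_jK_jD_j is positive
definite in every mode, i.e. the closed-loop linearized switched system is
QSR-state strictly input dissipative with storage V(x) = x'Px. -/
theorem closed_loop_dissipation_of_design_LMI
    {n m p q : ℕ} {ι : Type*} [Fintype ι]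
    (P : Matrix (Fin n) (Fin n) ℝ)
    (A : ι → Matrix (Fin n) (Fin n) ℝ)
    (B1 : ι → Matrix (Fin n) (Fin m) ℝ)
    (B2 : ι → Matrix (Fin n) (Fin p) ℝ)
    (C : ι → Matrix (Fin q) (Fin n) ℝ)
    (D : ι → Matrix (Fin q) (Fin p) ℝ)
    (H : Matrix (Fin m) (Fin n) ℝ)
    (U : ι → Matrix (Fin m) (Fin q) ℝ)
    (V : ι → Matrix (Fin m) (Fin m) ℝ)
    (Q : ι → Matrix (Fin q) (Fin q) ℝ)
    (S : ι → Matrix (Fin q) (Fin p) ℝ)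
    (R : ι → Matrix (Fin p) (Fin p) ℝ)
    (L : ι → Matrix (Fin q) (Fin q) ℝ)
    (hP : P.PosDef)
    (hQsym : ∀ j, (Q j).IsSymm)
    (hQneg : ∀ j, (-(Q j)).PosDef)
    (hRsym : ∀ j, (R j).IsSymm)
    (hLsym : ∀ j, (L j).IsSymm)
    (hLL : ∀ j, L j * L j = -(Q j))
    (hM : ∀ j, (designLMI P (A j) (B1 j) (B2 j) (C j) (D j) H (U j) (S j)
      (R j) (L j)).PosDef)
    (hPB : ∀ j, P * B1 j = B1 j * V j)
    (hV : ∀ j, IsUnit (V j)) :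
    ∀ j, (dissipationMatrix P
      (A j + B1 j * H + B1 j * ((V j)⁻¹ * U j) * C j)
      (B2 j + B1 j * ((V j)⁻¹ * U j) * D j)
      (C j) (D j) (Q j) (S j) (R j)).PosDef := by
  
  intro j
  have hPt : Pᵀ = P := (show P.IsSymm by simpa using hP.1).eq
  have hVV : V j * (V j)⁻¹ = 1 :=
    Matrix.mul_nonsing_inv _ ((Matrix.isUnit_iff_isUnit_det _).mp (hV j))
  have hQt : (Q j)ᵀ = Q j := (hQsym j).eq
  have hLt : (L j)ᵀ = L j := (hLsym j).eq
  set T : Matrix (Fin n ⊕ (Fin p ⊕ Fin q)) (Fin n ⊕ Fin p) ℝ :=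
    Matrix.fromBlocks 1 0 (Matrix.fromRows 0 (L j * C j))
      (Matrix.fromRows 1 (L j * D j)) with hT
  have hTinj : Function.Injective T.mulVec := by
    intro v w h
    funext k
    cases k with
    | inl i =>
      have := congrFun h (Sum.inl i)
      simpa [hT, Matrix.mulVec, dotProduct, Fintype.sum_sum_type,
        Matrix.fromBlocks, Matrix.one_apply] using this
    | inr i =>
      have := congrFun h (Sum.inr (Sum.inl i))
      simpa [hT, Matrix.mulVec, dotProduct, Fintype.sum_sum_type,
        Matrix.fromBlocks, Matrix.fromRows_apply_inl, Matrix.one_apply] using this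
  have f1 : P * (B1 j * ((V j)⁻¹ * (U j * C j))) = B1 j * (U j * C j) := by
    rw [← Matrix.mul_assoc, hPB j, Matrix.mul_assoc, ← Matrix.mul_assoc (V j), hVV,
      Matrix.one_mul]
  have f2 : P * (B1 j * ((V j)⁻¹ * (U j * D j))) = B1 j * (U j * D j) := by
    rw [← Matrix.mul_assoc, hPB j, Matrix.mul_assoc, ← Matrix.mul_assoc (V j), hVV,
      Matrix.one_mul]
  have f3 : ((V j)⁻¹)ᵀ * ((B1 j)ᵀ * P) = (B1 j)ᵀ := by
    have h1 : (B1 j)ᵀ * P = (V j)ᵀ * (B1 j)ᵀ := by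
      have := congrArg Matrix.transpose (hPB j)
      simpa [Matrix.transpose_mul, hPt] using this
    rw [h1, ← Matrix.mul_assoc, ← Matrix.transpose_mul, hVV, Matrix.transpose_one,
      Matrix.one_mul]
  have f4 : L j * (L j * C j) = -(Q j * C j) := by
    rw [← Matrix.mul_assoc, hLL j, Matrix.neg_mul]
  have f5 : L j * (L j * D j) = -(Q j * D j) := by
    rw [← Matrix.mul_assoc, hLL j, Matrix.neg_mul]
  have key : dissipationMatrix P
      (A j + B1 j * H + B1 j * ((V j)⁻¹ * U j) * C j)
      (B2 j + B1 j * ((V j)⁻¹ * U j) * D j)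
      (C j) (D j) (Q j) (S j) (R j)
      = Tᵀ * designLMI P (A j) (B1 j) (B2 j) (C j) (D j) H (U j) (S j)
        (R j) (L j) * T := by
    rw [dissipationMatrix, designLMI, hT]
    simp only [Matrix.fromBlocks_transpose, Matrix.transpose_fromRows,
      Matrix.transpose_fromCols, Matrix.transpose_zero, Matrix.transpose_one,
      Matrix.fromBlocks_multiply, Matrix.fromRows_mul, Matrix.mul_fromCols,
      Matrix.fromCols_mul_fromRows, Matrix.fromRows_mul_fromCols,
      Matrix.fromBlocks_mul_fromRows, Matrix.fromCols_mul_fromBlocks,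
      Matrix.mul_one, Matrix.one_mul, Matrix.mul_zero, Matrix.zero_mul,
      add_zero, zero_add, Matrix.mul_add, Matrix.add_mul]
    rw [Matrix.fromBlocks_inj]
    refine ⟨?_, ?_, ?_, ?_⟩ <;>
    · simp only [Matrix.transpose_add, Matrix.transpose_sub, Matrix.transpose_neg,
        Matrix.transpose_mul, Matrix.transpose_transpose, hPt, hQt, hLt,
        Matrix.mul_add, Matrix.add_mul, Matrix.sub_mul, Matrix.mul_sub,
        Matrix.neg_mul, Matrix.mul_neg, Matrix.mul_assoc, f1, f2, f3, f4, f5]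
      abel
  rw [key]
  exact posDef_conj_transpose (hM j) T hTinj
end

section
/- Let Σ be a finite set, and for each j ∈ Σ let Q_j ∈ ℝ^{q×q} be symmetric negative definite, S_j ∈ ℝ^{q×p}, and R_j ∈ ℝ^{p×p} symmetric. Then there exist constants a > 0 and b > 0, depending only on the family {Q_j, S_j, R_j : j ∈ Σ}, with the following property: for every T > 0, every switching signal σ : [0,T] → Σ, every continuous y : [0,T] → ℝ^q and w : [0,T] → ℝ^p, every x : [0,T] → ℝ^n, and every nonnegative function V : ℝ^n → ℝ such that t ↦ V(x(t)) is differentiable on [0,T] and satisfies d/dt V(x(t)) ≤ y(t)'Q_{σ(t)}y(t) + 2 y(t)'S_{σ(t)}w(t) + w(t)'R_{σ(t)}w(t) for all t ∈ [0,T], it holds that ∫₀ᵀ ‖y(t)‖² dt ≤ a ∫₀ᵀ ‖w(t)‖² dt + b V(x(0)). In particular, a QSR-dissipative switched system with Q_j negative definite in every mode is L2-stable under arbitrary switching. -/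
open Matrix

/-- Upper bound for a quadratic form by the sum of absolute entries. -/
lemma quad_abs_upper {k : ℕ} (M : Matrix (Fin k) (Fin k) ℝ) (v : Fin k → ℝ) :
    v ⬝ᵥ (M *ᵥ v) ≤ (∑ i, ∑ j, |M i j|) * (v ⬝ᵥ v) := by
  have hsq : ∀ i, v i ^ 2 ≤ v ⬝ᵥ v := by
    intro i
    have h : v ⬝ᵥ v = ∑ j, v j ^ 2 := by simp [dotProduct, sq]
    rw [h]
    exact Finset.single_le_sum (f := fun j => v j ^ 2) (fun j _ => sq_nonneg _) (Finset.mem_univ i)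
  have key : ∀ i j, v i * (M i j * v j) ≤ |M i j| * (v ⬝ᵥ v) := by
    intro i j
    have h1 := hsq i
    have h2 := hsq j
    have h3 : v i * (M i j * v j) ≤ |M i j| * (|v i| * |v j|) := by
      calc v i * (M i j * v j) ≤ |v i * (M i j * v j)| := le_abs_self _
      _ = |M i j| * (|v i| * |v j|) := by rw [abs_mul, abs_mul]; ring
    refine h3.trans ?_
    have habs : |v i| * |v j| ≤ v ⬝ᵥ v := by
      nlinarith [sq_abs (v i), sq_abs (v j), abs_nonneg (v i), abs_nonneg (v j)]
    exact mul_le_mul_of_nonneg_left habs (abs_nonneg _)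
  calc v ⬝ᵥ (M *ᵥ v) = ∑ i, ∑ j, v i * (M i j * v j) := by
        simp [dotProduct, mulVec, Finset.mul_sum]
  _ ≤ ∑ i, ∑ j, |M i j| * (v ⬝ᵥ v) :=
      Finset.sum_le_sum fun i _ => Finset.sum_le_sum fun j _ => key i j
  _ = (∑ i, ∑ j, |M i j|) * (v ⬝ᵥ v) := by rw [Finset.sum_mul]; congr 1; ext i; rw [Finset.sum_mul]

/-- Lower bound for a positive definite quadratic form. -/
lemma quad_lower {k : ℕ} {A : Matrix (Fin k) (Fin k) ℝ} (hA : A.PosDef) :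
    ∃ ε > (0:ℝ), ∀ v : Fin k → ℝ, ε * (v ⬝ᵥ v) ≤ v ⬝ᵥ (A *ᵥ v) := by
  rcases Nat.eq_zero_or_pos k with hk | hk
  · refine ⟨1, one_pos, fun v => ?_⟩
    subst hk
    simp [dotProduct]
  · set E := EuclideanSpace ℝ (Fin k)
    have hfc : Continuous fun u : E => (WithLp.equiv 2 (Fin k → ℝ) u) ⬝ᵥ (A *ᵥ (WithLp.equiv 2 (Fin k → ℝ) u)) := by
      have h1 : Continuous fun u : E => (WithLp.equiv 2 (Fin k → ℝ) u) :=
        (PiLp.continuousLinearEquiv 2 ℝ (fun _ : Fin k => ℝ)).continuous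
      unfold dotProduct mulVec
      refine continuous_finset_sum _ fun i _ => Continuous.mul ((continuous_apply i).comp h1) ?_
      exact continuous_finset_sum _ fun j _ => continuous_const.mul ((continuous_apply j).comp h1)
    have hsph : IsCompact (Metric.sphere (0:E) 1) := isCompact_sphere 0 1
    have hne : (Metric.sphere (0:E) 1).Nonempty := by
      refine ⟨EuclideanSpace.single ⟨0, hk⟩ (1:ℝ), ?_⟩
      rw [mem_sphere_zero_iff_norm, EuclideanSpace.norm_single]; simp
    obtain ⟨u₀, hu₀mem, hu₀min⟩ := hsph.exists_isMinOn hne (hfc.continuousOn)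
    set ε := (WithLp.equiv 2 (Fin k → ℝ) u₀) ⬝ᵥ (A *ᵥ (WithLp.equiv 2 (Fin k → ℝ) u₀)) with hε
    have hu₀ne : (WithLp.equiv 2 (Fin k → ℝ) u₀) ≠ 0 := by
      intro h
      have : u₀ = 0 := by
        apply (WithLp.equiv 2 (Fin k → ℝ)).injective
        simpa using h
      rw [this] at hu₀mem
      simp at hu₀mem
    have hεpos : 0 < ε := by have h := hA.dotProduct_mulVec_pos hu₀ne; rw [star_trivial] at h; exact h
    refine ⟨ε, hεpos, fun v => ?_⟩
    rcases eq_or_ne v 0 with rfl | hv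
    · simp
    · set c : ℝ := ‖((WithLp.equiv 2 (Fin k → ℝ)).symm v : E)‖ with hc
      have hcpos : 0 < c := by
        rw [hc, norm_pos_iff]
        intro h
        apply hv
        have := congrArg (WithLp.equiv 2 (Fin k → ℝ)) h
        simpa using this
      set u : E := c⁻¹ • (WithLp.equiv 2 (Fin k → ℝ)).symm v with hu
      have humem : u ∈ Metric.sphere (0:E) 1 := by
        simp only [Metric.mem_sphere, dist_zero_right, hu, norm_smul, norm_inv, Real.norm_eq_abs,
          abs_of_pos hcpos]
        field_simp
        exact hc.symm
      have hval : (WithLp.equiv 2 (Fin k → ℝ) u) = c⁻¹ • v := by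
        simp [hu]
      have := hu₀min humem
      simp only [Set.mem_setOf_eq] at this
      have hexp : (WithLp.equiv 2 (Fin k → ℝ) u) ⬝ᵥ (A *ᵥ (WithLp.equiv 2 (Fin k → ℝ) u))
          = c⁻¹ * c⁻¹ * (v ⬝ᵥ (A *ᵥ v)) := by
        rw [hval]
        rw [smul_dotProduct, mulVec_smul, dotProduct_smul]
        simp [smul_eq_mul]; ring
      have hεle : ε ≤ c⁻¹ * c⁻¹ * (v ⬝ᵥ (A *ᵥ v)) := by
        rw [← hexp]; exact this
      have hvv : v ⬝ᵥ v = c ^ 2 := by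
        rw [hc]
        rw [← real_inner_self_eq_norm_sq, EuclideanSpace.inner_eq_star_dotProduct]
        simp [dotProduct]
      have hfin : ε * c ^ 2 ≤ v ⬝ᵥ (A *ᵥ v) := by
        have h2 := mul_le_mul_of_nonneg_left hεle (le_of_lt (mul_pos hcpos hcpos))
        calc ε * c ^ 2 = (c * c) * ε := by ring
        _ ≤ (c * c) * (c⁻¹ * c⁻¹ * (v ⬝ᵥ (A *ᵥ v))) := h2
        _ = v ⬝ᵥ (A *ᵥ v) := by field_simp
      rw [hvv]; exact hfin

lemma dotProduct_self_nonneg' {k : ℕ} (v : Fin k → ℝ) : 0 ≤ v ⬝ᵥ v := by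
  have h : v ⬝ᵥ v = ∑ j, v j ^ 2 := by simp [dotProduct, sq]
  rw [h]
  exact Finset.sum_nonneg fun j _ => sq_nonneg _

/-- If every Q_j is symmetric negative definite (S_j, R_j
arbitrary with R_j symmetric), then there exist constants a, b > 0 depending
only on the family {Q_j, S_j, R_j} such that every trajectory of a switched
system which is dissipative with supply rate y'Q_σ y + 2 y'S_σ w + w'R_σ w and
nonnegative storage function V satisfies the L2 bound
∫₀ᵀ ‖y‖² ≤ a ∫₀ᵀ ‖w‖² + b V(x(0)); i.e. QSR-dissipativity with Q_j < 0 in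
every mode implies L2 stability under arbitrary switching. -/
theorem L2_stability_of_QSR_dissipative_switched
    {ι : Type*} [Fintype ι] {p q : ℕ}
    (Q : ι → Matrix (Fin q) (Fin q) ℝ)
    (S : ι → Matrix (Fin q) (Fin p) ℝ)
    (R : ι → Matrix (Fin p) (Fin p) ℝ)
    (hQsym : ∀ j, (Q j).IsSymm)
    (hQneg : ∀ j, (-(Q j)).PosDef)
    (hRsym : ∀ j, (R j).IsSymm) :
    ∃ a > (0:ℝ), ∃ b > (0:ℝ),
      ∀ (n : ℕ) (T : ℝ), 0 < T →
      ∀ (σ : ℝ → ι) (y : ℝ → Fin q → ℝ) (w : ℝ → Fin p → ℝ)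
        (x : ℝ → Fin n → ℝ) (V : (Fin n → ℝ) → ℝ) (V' : ℝ → ℝ),
        ContinuousOn y (Set.Icc 0 T) →
        ContinuousOn w (Set.Icc 0 T) →
        (∀ z, 0 ≤ V z) →
        (∀ t ∈ Set.Icc (0:ℝ) T, HasDerivAt (fun s => V (x s)) (V' t) t) →
        (∀ t ∈ Set.Icc (0:ℝ) T,
          V' t ≤ y t ⬝ᵥ (Q (σ t) *ᵥ y t) + 2 * (y t ⬝ᵥ (S (σ t) *ᵥ w t))
            + w t ⬝ᵥ (R (σ t) *ᵥ w t)) →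
        (∫ t in (0:ℝ)..T, y t ⬝ᵥ y t) ≤
          a * (∫ t in (0:ℝ)..T, w t ⬝ᵥ w t) + b * V (x 0) := by
  by_cases hι : Nonempty ι
  case neg =>
    refine ⟨1, one_pos, 1, one_pos, fun n T hT σ => ?_⟩
    exact absurd ⟨σ 0⟩ hι
  -- choose per-mode lower constants
  choose εf hεfpos hεflow using fun j => quad_lower (hQneg j)
  set ε : ℝ := Finset.univ.inf' (Finset.univ_nonempty) εf with hεdef
  have hεpos : 0 < ε := by
    rw [hεdef, Finset.lt_inf'_iff]
    exact fun j _ => hεfpos j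
  have hεle : ∀ j, ε ≤ εf j := fun j => Finset.inf'_le _ (Finset.mem_univ j)
  -- quadratic lower bound uniform in the mode
  have hQbound : ∀ (j : ι) (v : Fin q → ℝ), v ⬝ᵥ (Q j *ᵥ v) ≤ -ε * (v ⬝ᵥ v) := by
    intro j v
    have h1 := hεflow j v
    have h2 : v ⬝ᵥ ((-(Q j)) *ᵥ v) = -(v ⬝ᵥ (Q j *ᵥ v)) := by
      rw [neg_mulVec, dotProduct_neg]
    rw [h2] at h1
    have h3 : ε * (v ⬝ᵥ v) ≤ εf j * (v ⬝ᵥ v) :=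
      mul_le_mul_of_nonneg_right (hεle j) (dotProduct_self_nonneg' v)
    linarith
  -- upper constants
  set CS : ℝ := ∑ j : ι, (∑ i, ∑ i', |((S j)ᵀ * (S j)) i i'|) with hCSdef
  set CR : ℝ := ∑ j : ι, (∑ i, ∑ i', |(R j) i i'|) with hCRdef
  have hCSj : ∀ (j : ι) (v : Fin p → ℝ), (S j *ᵥ v) ⬝ᵥ (S j *ᵥ v) ≤ CS * (v ⬝ᵥ v) := by
    intro j v
    have h1 : v ⬝ᵥ (((S j)ᵀ * (S j)) *ᵥ v) = (S j *ᵥ v) ⬝ᵥ (S j *ᵥ v) := by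
      rw [← mulVec_mulVec, dotProduct_mulVec, vecMul_transpose]
    rw [← h1]
    refine (quad_abs_upper _ v).trans ?_
    refine mul_le_mul_of_nonneg_right ?_ (dotProduct_self_nonneg' v)
    refine Finset.single_le_sum (f := fun j => (∑ i, ∑ i', |((S j)ᵀ * (S j)) i i'|)) ?_ (Finset.mem_univ j)
    intro j' _
    exact Finset.sum_nonneg fun i _ => Finset.sum_nonneg fun i' _ => abs_nonneg _
  have hCRj : ∀ (j : ι) (v : Fin p → ℝ), v ⬝ᵥ (R j *ᵥ v) ≤ CR * (v ⬝ᵥ v) := by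
    intro j v
    refine (quad_abs_upper _ v).trans ?_
    refine mul_le_mul_of_nonneg_right ?_ (dotProduct_self_nonneg' v)
    refine Finset.single_le_sum (f := fun j => (∑ i, ∑ i', |(R j) i i'|)) ?_ (Finset.mem_univ j)
    intro j' _
    exact Finset.sum_nonneg fun i _ => Finset.sum_nonneg fun i' _ => abs_nonneg _
  have hCSnn : 0 ≤ CS := by
    refine Finset.sum_nonneg fun j _ => ?_
    exact Finset.sum_nonneg fun i _ => Finset.sum_nonneg fun i' _ => abs_nonneg _
  have hCRnn : 0 ≤ CR := by
    refine Finset.sum_nonneg fun j _ => ?_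
    exact Finset.sum_nonneg fun i _ => Finset.sum_nonneg fun i' _ => abs_nonneg _
  set K : ℝ := (2 / ε) * CS + CR + 1 with hKdef
  have hKpos : 0 < K := by
    have : 0 ≤ (2 / ε) * CS := mul_nonneg (by positivity) hCSnn
    rw [hKdef]; linarith
  refine ⟨2 * K / ε, by positivity, 2 / ε, by positivity, ?_⟩
  intro n T hT σ y w x V V' hy hw hV0 hVd hdiss
  -- pointwise supply-rate bound
  have hrate : ∀ (j : ι) (yt : Fin q → ℝ) (wt : Fin p → ℝ),
      yt ⬝ᵥ (Q j *ᵥ yt) + 2 * (yt ⬝ᵥ (S j *ᵥ wt)) + wt ⬝ᵥ (R j *ᵥ wt)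
        ≤ -(ε / 2) * (yt ⬝ᵥ yt) + K * (wt ⬝ᵥ wt) := by
    intro j yt wt
    have hQ := hQbound j yt
    have hR := hCRj j wt
    have hS := hCSj j wt
    -- Young's inequality for the cross term
    set d : Fin q → ℝ := (ε / 2) • yt - S j *ᵥ wt with hd
    have hd0 : 0 ≤ d ⬝ᵥ d := dotProduct_self_nonneg' d
    have hdexp : d ⬝ᵥ d = (ε / 2) ^ 2 * (yt ⬝ᵥ yt) - ε * (yt ⬝ᵥ (S j *ᵥ wt))
        + (S j *ᵥ wt) ⬝ᵥ (S j *ᵥ wt) := by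
      rw [hd]
      simp only [sub_dotProduct, dotProduct_sub, smul_dotProduct, dotProduct_smul, smul_eq_mul]
      rw [dotProduct_comm (S j *ᵥ wt) yt]
      ring
    have hcross : 2 * (yt ⬝ᵥ (S j *ᵥ wt)) ≤ (ε / 2) * (yt ⬝ᵥ yt)
        + (2 / ε) * ((S j *ᵥ wt) ⬝ᵥ (S j *ᵥ wt)) := by
      rw [hdexp] at hd0
      have h1 : ε * (yt ⬝ᵥ (S j *ᵥ wt)) ≤ (ε / 2) ^ 2 * (yt ⬝ᵥ yt) + (S j *ᵥ wt) ⬝ᵥ (S j *ᵥ wt) := by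
        linarith
      have h2 := mul_le_mul_of_nonneg_left h1 (le_of_lt (by positivity : (0:ℝ) < 2 / ε))
      have hεne : ε ≠ 0 := ne_of_gt hεpos
      calc 2 * (yt ⬝ᵥ (S j *ᵥ wt)) = (2 / ε) * (ε * (yt ⬝ᵥ (S j *ᵥ wt))) := by field_simp
      _ ≤ (2 / ε) * ((ε / 2) ^ 2 * (yt ⬝ᵥ yt) + (S j *ᵥ wt) ⬝ᵥ (S j *ᵥ wt)) := h2
      _ = (ε / 2) * (yt ⬝ᵥ yt) + (2 / ε) * ((S j *ᵥ wt) ⬝ᵥ (S j *ᵥ wt)) := by field_simp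
    have hSbd : (2 / ε) * ((S j *ᵥ wt) ⬝ᵥ (S j *ᵥ wt)) ≤ (2 / ε) * (CS * (wt ⬝ᵥ wt)) :=
      mul_le_mul_of_nonneg_left hS (le_of_lt (by positivity))
    have hwnn : 0 ≤ wt ⬝ᵥ wt := dotProduct_self_nonneg' wt
    rw [hKdef]
    nlinarith [hQ, hR, hcross, hSbd]
  -- truncation to [0, T]
  set proj : ℝ → ℝ := fun t => max 0 (min t T) with hproj
  have hprojcont : Continuous proj := (continuous_const.max (continuous_id.min continuous_const))
  have hprojmem : ∀ t, proj t ∈ Set.Icc (0:ℝ) T := by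
    intro t
    constructor
    · exact le_max_left _ _
    · exact max_le hT.le (min_le_right _ _)
  have hprojid : ∀ t ∈ Set.Icc (0:ℝ) T, proj t = t := by
    intro t ht
    rw [hproj]
    simp only [min_eq_left ht.2, max_eq_right ht.1]
  set yc : ℝ → Fin q → ℝ := fun t => y (proj t) with hyc
  set wc : ℝ → Fin p → ℝ := fun t => w (proj t) with hwc
  have hyccont : Continuous yc := hy.comp_continuous hprojcont hprojmem
  have hwccont : Continuous wc := hw.comp_continuous hprojcont hprojmem
  have hyd : Continuous fun t => yc t ⬝ᵥ yc t := by
    unfold dotProduct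
    exact continuous_finset_sum _ fun i _ =>
      ((continuous_apply i).comp hyccont).mul ((continuous_apply i).comp hyccont)
  have hwd : Continuous fun t => wc t ⬝ᵥ wc t := by
    unfold dotProduct
    exact continuous_finset_sum _ fun i _ =>
      ((continuous_apply i).comp hwccont).mul ((continuous_apply i).comp hwccont)
  set h : ℝ → ℝ := fun t => -(ε / 2) * (yc t ⬝ᵥ yc t) + K * (wc t ⬝ᵥ wc t) with hhdef
  have hhcont : Continuous h := (continuous_const.mul hyd).add (continuous_const.mul hwd)
  set G : ℝ → ℝ := fun t => ∫ s in (0:ℝ)..t, h s with hGdef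
  have hGderiv : ∀ t, HasDerivAt G (h t) t := fun t =>
    (hhcont.integral_hasStrictDerivAt 0 t).hasDerivAt
  set F : ℝ → ℝ := fun t => V (x t) - G t with hFdef
  have hFderiv : ∀ t ∈ Set.Icc (0:ℝ) T, HasDerivAt F (V' t - h t) t := fun t ht =>
    (hVd t ht).sub (hGderiv t)
  have hderiv_nonpos : ∀ t ∈ Set.Icc (0:ℝ) T, V' t - h t ≤ 0 := by
    intro t ht
    have h1 := hdiss t ht
    have h2 := hrate (σ t) (y t) (w t)
    have h3 : h t = -(ε / 2) * (y t ⬝ᵥ y t) + K * (w t ⬝ᵥ w t) := by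
      rw [hhdef]
      simp only [hyc, hwc, hprojid t ht]
    rw [sub_nonpos, h3]
    exact h1.trans h2
  have hanti : AntitoneOn F (Set.Icc 0 T) := by
    refine antitoneOn_of_deriv_nonpos (convex_Icc 0 T) ?_ ?_ ?_
    · exact fun t ht => ((hFderiv t ht).continuousAt).continuousWithinAt
    · intro t ht
      rw [interior_Icc] at ht
      exact ((hFderiv t (Set.Ioo_subset_Icc_self ht)).differentiableAt).differentiableWithinAt
    · intro t ht
      rw [interior_Icc] at ht
      rw [(hFderiv t (Set.Ioo_subset_Icc_self ht)).deriv]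
      exact hderiv_nonpos t (Set.Ioo_subset_Icc_self ht)
  have hFT : F T ≤ F 0 :=
    hanti (Set.left_mem_Icc.mpr hT.le) (Set.right_mem_Icc.mpr hT.le) hT.le
  have hG0 : G 0 = 0 := intervalIntegral.integral_same
  -- compute the integral of h
  have huIcc : Set.uIcc (0:ℝ) T = Set.Icc 0 T := Set.uIcc_of_le hT.le
  have hydint : IntervalIntegrable (fun t => yc t ⬝ᵥ yc t) MeasureTheory.volume 0 T :=
    hyd.intervalIntegrable 0 T
  have hwdint : IntervalIntegrable (fun t => wc t ⬝ᵥ wc t) MeasureTheory.volume 0 T :=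
    hwd.intervalIntegrable 0 T
  have hGT : G T = -(ε / 2) * (∫ t in (0:ℝ)..T, yc t ⬝ᵥ yc t)
      + K * (∫ t in (0:ℝ)..T, wc t ⬝ᵥ wc t) := by
    rw [hGdef]
    simp only [hhdef]
    rw [intervalIntegral.integral_add (hydint.const_mul _) (hwdint.const_mul _),
      intervalIntegral.integral_const_mul, intervalIntegral.integral_const_mul]
  have hyeq : (∫ t in (0:ℝ)..T, yc t ⬝ᵥ yc t) = ∫ t in (0:ℝ)..T, y t ⬝ᵥ y t := by
    refine intervalIntegral.integral_congr ?_
    intro t ht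
    rw [huIcc] at ht
    simp only [hyc, hprojid t ht]
  have hweq : (∫ t in (0:ℝ)..T, wc t ⬝ᵥ wc t) = ∫ t in (0:ℝ)..T, w t ⬝ᵥ w t := by
    refine intervalIntegral.integral_congr ?_
    intro t ht
    rw [huIcc] at ht
    simp only [hwc, hprojid t ht]
  set Iy : ℝ := ∫ t in (0:ℝ)..T, y t ⬝ᵥ y t with hIy
  set Iw : ℝ := ∫ t in (0:ℝ)..T, w t ⬝ᵥ w t with hIw
  have hkey : -(ε / 2) * Iy + K * Iw ≥ -V (x 0) := by
    have h1 : V (x T) - G T ≤ V (x 0) - G 0 := hFT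
    have h2 : 0 ≤ V (x T) := hV0 _
    rw [hG0, hGT, hyeq, hweq] at h1
    linarith
  have hεne : ε ≠ 0 := ne_of_gt hεpos
  have hfinal : Iy ≤ 2 * K / ε * Iw + 2 / ε * V (x 0) := by
    have h3 := mul_le_mul_of_nonneg_left (by linarith [hkey] : (ε / 2) * Iy ≤ K * Iw + V (x 0))
      (le_of_lt (by positivity : (0:ℝ) < 2 / ε))
    calc Iy = (2 / ε) * ((ε / 2) * Iy) := by field_simp
    _ ≤ (2 / ε) * (K * Iw + V (x 0)) := h3
    _ = 2 * K / ε * Iw + 2 / ε * V (x 0) := by field_simp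
  exact hfinal
end

section
/- Suppose there exist a symmetric positive definite P ∈ ℝ^{n×n} and, for each j ∈ Σ, a symmetric Q_j ∈ ℝ^{q×q}, a matrix S_j ∈ ℝ^{q×p}, and a symmetric R_j ∈ ℝ^{p×p} such that the closed-loop dissipation matrix Γ_j formed with Â_j = A_j + B¹_jH and B̂_j = B²_j is positive definite (i.e., the linear approximation of the switched system is QSR-state strictly input dissipative with quadratic storage V(x) = x'Px in every mode). Then the nonlinear switched system is locally QSR-dissipative with the same dissipativity matrices and storage V(x) = x'Px: there exists ε > 0 such that for every j ∈ Σ and all x ∈ ℝ^n, w ∈ ℝ^p with ‖x‖ < ε and ‖w‖ < ε, setting y = g_j(x,w), one has y'Q_jy + 2y'S_jw + w'R_jw ≥ 2 x'P f_j(x, h(x), w). -/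
open Matrix

/-- Matrix–vector multiplication as a continuous linear map. -/
noncomputable def mulVecCLM {a b : ℕ} (A : Matrix (Fin a) (Fin b) ℝ) :
    (Fin b → ℝ) →L[ℝ] (Fin a → ℝ) :=
  LinearMap.toContinuousLinearMap (Matrix.mulVecLin A)

section Auxiliary

open Asymptotics Filter

lemma mulVecCLM_apply {a b : ℕ} (M : Matrix (Fin a) (Fin b) ℝ) (v : Fin b → ℝ) :
    mulVecCLM M v = M *ᵥ v := rfl

lemma dot_transpose {a b : ℕ} (M : Matrix (Fin a) (Fin b) ℝ) (x : Fin b → ℝ) (y : Fin a → ℝ) :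
    x ⬝ᵥ (Mᵀ *ᵥ y) = (M *ᵥ x) ⬝ᵥ y := by
  rw [Matrix.dotProduct_mulVec, Matrix.vecMul_transpose]

lemma dot_symm {k : ℕ} {M : Matrix (Fin k) (Fin k) ℝ} (hM : M.IsSymm)
    (x y : Fin k → ℝ) : x ⬝ᵥ (M *ᵥ y) = y ⬝ᵥ (M *ᵥ x) := by
  conv_lhs => rw [← hM]
  rw [dot_transpose, dotProduct_comm]

lemma abs_dot_le {k : ℕ} (a b : Fin k → ℝ) : |a ⬝ᵥ b| ≤ k * (‖a‖ * ‖b‖) := by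
  calc |∑ i, a i * b i| ≤ ∑ i, |a i * b i| := Finset.abs_sum_le_sum_abs _ _
    _ ≤ ∑ _i : Fin k, ‖a‖ * ‖b‖ := by
        refine Finset.sum_le_sum fun i _ => ?_
        rw [abs_mul]
        have h1 : |a i| ≤ ‖a‖ := by simpa using norm_le_pi_norm a i
        have h2 : |b i| ≤ ‖b‖ := by simpa using norm_le_pi_norm b i
        exact mul_le_mul h1 h2 (abs_nonneg _) (norm_nonneg _)
    _ = k * (‖a‖ * ‖b‖) := by simp [Finset.sum_const, nsmul_eq_mul]

lemma norm_mulVec_le {a b : ℕ} (M : Matrix (Fin a) (Fin b) ℝ) (v : Fin b → ℝ) :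
    ‖M *ᵥ v‖ ≤ ‖mulVecCLM M‖ * ‖v‖ := (mulVecCLM M).le_opNorm v

lemma qform_continuous {κ : Type*} [Fintype κ] (Γ : Matrix κ κ ℝ) :
    Continuous fun v : κ → ℝ => v ⬝ᵥ (Γ *ᵥ v) := by
  simp only [dotProduct, mulVec]
  exact continuous_finset_sum _ fun i _ =>
    (continuous_apply i).mul (continuous_finset_sum _ fun j _ =>
      continuous_const.mul (continuous_apply j))

lemma posdef_lower {κ : Type*} [Fintype κ] {Γ : Matrix κ κ ℝ} (hΓ : Γ.PosDef) :
    ∃ c > (0:ℝ), ∀ v : κ → ℝ, c * ‖v‖ ^ 2 ≤ v ⬝ᵥ (Γ *ᵥ v) := by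
  have hpos : ∀ v : κ → ℝ, v ≠ 0 → 0 < v ⬝ᵥ (Γ *ᵥ v) := by
    intro v hv
    simpa using hΓ.dotProduct_mulVec_pos hv
  cases isEmpty_or_nonempty κ with
  | inl hemp =>
      refine ⟨1, one_pos, fun v => ?_⟩
      have hv : v = 0 := Subsingleton.elim _ _
      simp [hv]
  | inr hne =>
      have hsne : (Metric.sphere (0 : κ → ℝ) 1).Nonempty :=
        NormedSpace.sphere_nonempty.2 zero_le_one
      obtain ⟨v₀, hv₀s, hmin⟩ :=
        (isCompact_sphere (0 : κ → ℝ) 1).exists_isMinOn hsne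
          (qform_continuous Γ).continuousOn
      have hv₀norm : ‖v₀‖ = 1 := by simpa using hv₀s
      have hv₀ne : v₀ ≠ 0 := by
        intro hh; rw [hh] at hv₀norm; simp at hv₀norm
      refine ⟨v₀ ⬝ᵥ (Γ *ᵥ v₀), hpos v₀ hv₀ne, fun v => ?_⟩
      rcases eq_or_ne v 0 with rfl | hv
      · simp
      · have htpos : (0:ℝ) < ‖v‖ := norm_pos_iff.2 hv
        set u : κ → ℝ := ‖v‖⁻¹ • v with hu
        have hus : u ∈ Metric.sphere (0 : κ → ℝ) 1 := by
          simp [hu, norm_smul, abs_of_pos (inv_pos.2 htpos),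
            inv_mul_cancel₀ htpos.ne']
        have hmin' := hmin hus
        have hveq : v = ‖v‖ • u := by
          rw [hu, smul_smul, mul_inv_cancel₀ htpos.ne', one_smul]
        have hexp : v ⬝ᵥ (Γ *ᵥ v) = ‖v‖ ^ 2 * (u ⬝ᵥ (Γ *ᵥ u)) := by
          conv_lhs => rw [hveq]
          simp [Matrix.mulVec_smul, smul_dotProduct, dotProduct_smul,
            smul_eq_mul]
          ring
        rw [hexp]
        have h1 : v₀ ⬝ᵥ (Γ *ᵥ v₀) ≤ u ⬝ᵥ (Γ *ᵥ u) := hmin'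
        nlinarith [sq_nonneg ‖v‖]

lemma key_algebra {n p q : ℕ}
    (P Ahat : Matrix (Fin n) (Fin n) ℝ) (Bhat : Matrix (Fin n) (Fin p) ℝ)
    (C : Matrix (Fin q) (Fin n) ℝ) (D : Matrix (Fin q) (Fin p) ℝ)
    (Q : Matrix (Fin q) (Fin q) ℝ) (S : Matrix (Fin q) (Fin p) ℝ)
    (R : Matrix (Fin p) (Fin p) ℝ)
    (hP : P.IsSymm) (hQ : Q.IsSymm)
    (x : Fin n → ℝ) (w : Fin p → ℝ) (e : Fin q → ℝ) (d : Fin n → ℝ) :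
    (C *ᵥ x + D *ᵥ w + e) ⬝ᵥ (Q *ᵥ (C *ᵥ x + D *ᵥ w + e))
      + 2 * ((C *ᵥ x + D *ᵥ w + e) ⬝ᵥ (S *ᵥ w)) + w ⬝ᵥ (R *ᵥ w)
      - 2 * (x ⬝ᵥ (P *ᵥ (Ahat *ᵥ x + Bhat *ᵥ w + d)))
    = (Sum.elim x w) ⬝ᵥ (dissipationMatrix P Ahat Bhat C D Q S R *ᵥ Sum.elim x w)
      + (e ⬝ᵥ (Q *ᵥ e) + 2 * (e ⬝ᵥ (Q *ᵥ (C *ᵥ x + D *ᵥ w))) + 2 * (e ⬝ᵥ (S *ᵥ w))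
        - 2 * (x ⬝ᵥ (P *ᵥ d))) := by
  simp only [dissipationMatrix, Matrix.fromBlocks_mulVec, sumElim_dotProduct_sumElim,
    Matrix.sub_mulVec, Matrix.add_mulVec, Matrix.transpose_add, Matrix.transpose_sub,
    Matrix.transpose_mul, Matrix.transpose_transpose, ← Matrix.mulVec_mulVec,
    Matrix.mulVec_add, dotProduct_add, add_dotProduct,
    dotProduct_sub, sub_dotProduct, dot_transpose, hP, hQ,
    Sum.elim_comp_inl, Sum.elim_comp_inr]
  have h1 := dot_symm hQ (D *ᵥ w) (C *ᵥ x)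
  have h2 := dot_symm hQ e (C *ᵥ x)
  have h3 := dot_symm hQ e (D *ᵥ w)
  have h4 := dot_symm hP (Ahat *ᵥ x) x
  have c1 := dotProduct_comm (Q *ᵥ (D *ᵥ w)) (C *ᵥ x)
  have c2 := dotProduct_comm (S *ᵥ w) (C *ᵥ x)
  have c3 := dotProduct_comm (S *ᵥ w) (D *ᵥ w)
  have c4 := dotProduct_comm (P *ᵥ (Bhat *ᵥ w)) x
  linear_combination h1 - c1 - h2 - h3 + h4 - c2 - c3 + c4

lemma dot_littleO {α : Type*} [NormedAddCommGroup α] {l : Filter α} {k : ℕ}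
    {u v : α → Fin k → ℝ} {b1 b2 : α → ℝ}
    (hu : (fun z => ‖u z‖) =O[l] b1) (hv : (fun z => ‖v z‖) =o[l] b2) :
    (fun z => u z ⬝ᵥ v z) =o[l] fun z => b1 z * b2 z := by
  have h0 : (fun z => u z ⬝ᵥ v z) =O[l] fun z => ‖u z‖ * ‖v z‖ := by
    refine IsBigO.of_bound k (Filter.Eventually.of_forall fun z => ?_)
    have := abs_dot_le (u z) (v z)
    calc ‖u z ⬝ᵥ v z‖ = |u z ⬝ᵥ v z| := Real.norm_eq_abs _
      _ ≤ k * (‖u z‖ * ‖v z‖) := this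
      _ = k * ‖‖u z‖ * ‖v z‖‖ := by
          rw [Real.norm_of_nonneg (by positivity)]
  exact h0.trans_isLittleO (hu.mul_isLittleO hv)

lemma norm_le_elim {n p : ℕ} (x : Fin n → ℝ) (w : Fin p → ℝ) :
    ‖(x, w)‖ ≤ ‖Sum.elim x w‖ := by
  rw [Prod.norm_def]
  refine max_le ?_ ?_
  · refine (pi_norm_le_iff_of_nonneg (norm_nonneg _)).2 fun i => ?_
    exact le_trans (le_of_eq rfl) (norm_le_pi_norm (Sum.elim x w) (Sum.inl i))
  · refine (pi_norm_le_iff_of_nonneg (norm_nonneg _)).2 fun i => ?_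
    exact le_trans (le_of_eq rfl) (norm_le_pi_norm (Sum.elim x w) (Sum.inr i))

/-- The main work for a single mode. -/
lemma single_mode {n p q : ℕ}
    {P Ahat : Matrix (Fin n) (Fin n) ℝ} {Bhat : Matrix (Fin n) (Fin p) ℝ}
    {C : Matrix (Fin q) (Fin n) ℝ} {D : Matrix (Fin q) (Fin p) ℝ}
    {Q : Matrix (Fin q) (Fin q) ℝ} {S : Matrix (Fin q) (Fin p) ℝ}
    {R : Matrix (Fin p) (Fin p) ℝ}
    (hP : P.IsSymm) (hQ : Q.IsSymm)
    {y : (Fin n → ℝ) × (Fin p → ℝ) → Fin q → ℝ}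
    {u : (Fin n → ℝ) × (Fin p → ℝ) → Fin n → ℝ}
    (hy : (fun z : (Fin n → ℝ) × (Fin p → ℝ) =>
      y z - (C *ᵥ z.1 + D *ᵥ z.2)) =o[nhds 0] fun z => z)
    (hu : (fun z : (Fin n → ℝ) × (Fin p → ℝ) =>
      u z - (Ahat *ᵥ z.1 + Bhat *ᵥ z.2)) =o[nhds 0] fun z => z)
    (hΓ : (dissipationMatrix P Ahat Bhat C D Q S R).PosDef) :
    ∀ᶠ z : (Fin n → ℝ) × (Fin p → ℝ) in nhds 0,
      2 * (z.1 ⬝ᵥ (P *ᵥ u z)) ≤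
        y z ⬝ᵥ (Q *ᵥ y z) + 2 * (y z ⬝ᵥ (S *ᵥ z.2)) + z.2 ⬝ᵥ (R *ᵥ z.2) := by
  obtain ⟨c, hc, hlow⟩ := posdef_lower hΓ
  set e : (Fin n → ℝ) × (Fin p → ℝ) → Fin q → ℝ :=
    fun z => y z - (C *ᵥ z.1 + D *ᵥ z.2) with he
  set d : (Fin n → ℝ) × (Fin p → ℝ) → Fin n → ℝ :=
    fun z => u z - (Ahat *ᵥ z.1 + Bhat *ᵥ z.2) with hd
  have hyn : (fun z : (Fin n → ℝ) × (Fin p → ℝ) => ‖e z‖) =o[nhds 0] fun z => ‖z‖ :=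
    isLittleO_norm_norm.2 hy
  have hdn : (fun z : (Fin n → ℝ) × (Fin p → ℝ) => ‖d z‖) =o[nhds 0] fun z => ‖z‖ :=
    isLittleO_norm_norm.2 hu
  have hQe : (fun z : (Fin n → ℝ) × (Fin p → ℝ) => ‖Q *ᵥ e z‖) =o[nhds 0] fun z => ‖z‖ := by
    refine IsBigO.trans_isLittleO ?_ hyn
    refine IsBigO.of_bound ‖mulVecCLM Q‖ (Filter.Eventually.of_forall fun z => ?_)
    simpa using norm_mulVec_le Q (e z)
  have hPd : (fun z : (Fin n → ℝ) × (Fin p → ℝ) => ‖P *ᵥ d z‖) =o[nhds 0] fun z => ‖z‖ := by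
    refine IsBigO.trans_isLittleO ?_ hdn
    refine IsBigO.of_bound ‖mulVecCLM P‖ (Filter.Eventually.of_forall fun z => ?_)
    simpa using norm_mulVec_le P (d z)
  have hegO : (fun z : (Fin n → ℝ) × (Fin p → ℝ) => ‖e z‖) =O[nhds 0] fun z => ‖z‖ :=
    hyn.isBigO
  have hlin : (fun z : (Fin n → ℝ) × (Fin p → ℝ) =>
      ‖Q *ᵥ (C *ᵥ z.1 + D *ᵥ z.2)‖) =O[nhds 0] fun z => ‖z‖ := by
    refine IsBigO.of_bound (‖mulVecCLM Q‖ * (‖mulVecCLM C‖ + ‖mulVecCLM D‖))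
      (Filter.Eventually.of_forall fun z => ?_)
    have h1 := norm_mulVec_le Q (C *ᵥ z.1 + D *ᵥ z.2)
    have h2 := norm_mulVec_le C z.1
    have h3 := norm_mulVec_le D z.2
    have h4 : ‖z.1‖ ≤ ‖z‖ := norm_fst_le z
    have h5 : ‖z.2‖ ≤ ‖z‖ := norm_snd_le z
    have h6 := norm_add_le (C *ᵥ z.1) (D *ᵥ z.2)
    have hq0 : (0:ℝ) ≤ ‖mulVecCLM Q‖ := norm_nonneg _
    have hc0 : (0:ℝ) ≤ ‖mulVecCLM C‖ := norm_nonneg _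
    have hd0 : (0:ℝ) ≤ ‖mulVecCLM D‖ := norm_nonneg _
    have hz0 : (0:ℝ) ≤ ‖z‖ := norm_nonneg _
    simp only [norm_norm, Real.norm_of_nonneg hz0]
    have e2 : ‖C *ᵥ z.1‖ ≤ ‖mulVecCLM C‖ * ‖z‖ :=
      h2.trans (mul_le_mul_of_nonneg_left h4 hc0)
    have e3 : ‖D *ᵥ z.2‖ ≤ ‖mulVecCLM D‖ * ‖z‖ :=
      h3.trans (mul_le_mul_of_nonneg_left h5 hd0)
    calc ‖Q *ᵥ (C *ᵥ z.1 + D *ᵥ z.2)‖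
        ≤ ‖mulVecCLM Q‖ * ‖C *ᵥ z.1 + D *ᵥ z.2‖ := h1
      _ ≤ ‖mulVecCLM Q‖ * ((‖mulVecCLM C‖ + ‖mulVecCLM D‖) * ‖z‖) :=
          mul_le_mul_of_nonneg_left (h6.trans (by linarith)) hq0
      _ = ‖mulVecCLM Q‖ * (‖mulVecCLM C‖ + ‖mulVecCLM D‖) * ‖z‖ := by ring
  have hS2 : (fun z : (Fin n → ℝ) × (Fin p → ℝ) => ‖S *ᵥ z.2‖) =O[nhds 0] fun z => ‖z‖ := by
    refine IsBigO.of_bound ‖mulVecCLM S‖ (Filter.Eventually.of_forall fun z => ?_)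
    have h1 := norm_mulVec_le S z.2
    have h5 : ‖z.2‖ ≤ ‖z‖ := norm_snd_le z
    have hs0 : (0:ℝ) ≤ ‖mulVecCLM S‖ := norm_nonneg _
    have hz0 : (0:ℝ) ≤ ‖z‖ := norm_nonneg _
    simp only [norm_norm, Real.norm_of_nonneg hz0]
    exact h1.trans (mul_le_mul_of_nonneg_left h5 hs0)
  have hz1 : (fun z : (Fin n → ℝ) × (Fin p → ℝ) => ‖z.1‖) =O[nhds 0] fun z => ‖z‖ := by
    refine IsBigO.of_bound 1 (Filter.Eventually.of_forall fun z => ?_)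
    have h4 : ‖z.1‖ ≤ ‖z‖ := norm_fst_le z
    have hz0 : (0:ℝ) ≤ ‖z‖ := norm_nonneg _
    simp only [norm_norm, Real.norm_of_nonneg hz0, one_mul]
    exact h4
  have hErr : (fun z : (Fin n → ℝ) × (Fin p → ℝ) =>
      e z ⬝ᵥ (Q *ᵥ e z)
      + 2 * ((Q *ᵥ (C *ᵥ z.1 + D *ᵥ z.2)) ⬝ᵥ e z)
      + 2 * ((S *ᵥ z.2) ⬝ᵥ e z)
      - 2 * (z.1 ⬝ᵥ (P *ᵥ d z))) =o[nhds 0] fun z => ‖z‖ * ‖z‖ := by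
    have T1 := dot_littleO hegO hQe
    have T2 := (dot_littleO hlin hyn).const_mul_left 2
    have T3 := (dot_littleO hS2 hyn).const_mul_left 2
    have T4 := (dot_littleO hz1 hPd).const_mul_left 2
    exact ((T1.add T2).add T3).sub T4
  have hsmall := hErr.def (half_pos hc)
  filter_upwards [hsmall] with z hz
  have hyz : y z = C *ᵥ z.1 + D *ᵥ z.2 + e z := by simp only [he]; abel
  have huz : u z = Ahat *ᵥ z.1 + Bhat *ᵥ z.2 + d z := by simp only [hd]; abel
  rw [hyz, huz]
  have hkey := key_algebra P Ahat Bhat C D Q S R hP hQ z.1 z.2 (e z) (d z)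
  have hq := hlow (Sum.elim z.1 z.2)
  have hzelim : ‖z‖ ≤ ‖Sum.elim z.1 z.2‖ := by
    simpa using norm_le_elim z.1 z.2
  have hq2 : c * ‖z‖ ^ 2 ≤ (Sum.elim z.1 z.2) ⬝ᵥ
      (dissipationMatrix P Ahat Bhat C D Q S R *ᵥ Sum.elim z.1 z.2) := by
    refine le_trans ?_ hq
    have := pow_le_pow_left₀ (norm_nonneg z) hzelim 2
    nlinarith
  have hcomm1 : e z ⬝ᵥ (Q *ᵥ (C *ᵥ z.1 + D *ᵥ z.2))
      = (Q *ᵥ (C *ᵥ z.1 + D *ᵥ z.2)) ⬝ᵥ e z := dotProduct_comm _ _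
  have hcomm2 : e z ⬝ᵥ (S *ᵥ z.2) = (S *ᵥ z.2) ⬝ᵥ e z := dotProduct_comm _ _
  have habs : |e z ⬝ᵥ (Q *ᵥ e z)
      + 2 * ((Q *ᵥ (C *ᵥ z.1 + D *ᵥ z.2)) ⬝ᵥ e z)
      + 2 * ((S *ᵥ z.2) ⬝ᵥ e z)
      - 2 * (z.1 ⬝ᵥ (P *ᵥ d z))| ≤ c / 2 * (‖z‖ * ‖z‖) := by
    have hz0 : (0:ℝ) ≤ ‖z‖ * ‖z‖ := by positivity
    have h' := hz
    rw [Real.norm_of_nonneg hz0, Real.norm_eq_abs] at h'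
    exact h'
  have hsq : ‖z‖ ^ 2 = ‖z‖ * ‖z‖ := sq ‖z‖
  rw [hsq] at hq2
  have habs' := abs_le.1 habs
  linarith [hkey, hq2, habs'.1, habs'.2, hcomm1, hcomm2]

lemma posdef_isSymm {k : ℕ} {P : Matrix (Fin k) (Fin k) ℝ} (hP : P.PosDef) : P.IsSymm := by
  rw [Matrix.IsSymm]
  ext i j
  rw [Matrix.transpose_apply]
  have h2 := congrFun (congrFun hP.1 i) j
  simpa [Matrix.conjTranspose_apply] using h2

end Auxiliary

/-- If the linear approximation of the nonlinear switched
system is QSR-state strictly input dissipative in every mode with quadratic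
storage V(x) = x'Px (i.e. the closed-loop dissipation matrix Γ_j built with
Â_j = A_j + B¹_jH, B̂_j = B²_j is positive definite), then the nonlinear
switched system is locally QSR-dissipative with the same dissipativity
matrices and the same storage: there is ε > 0 such that for all j and all
‖x‖ < ε, ‖w‖ < ε, with y = g_j(x,w), one has
y'Q_jy + 2y'S_jw + w'R_jw ≥ 2 x'P f_j(x, h(x), w). -/
theorem local_QSR_dissipativity_of_linearization
    {n m p q : ℕ} {ι : Type*} [Fintype ι]
    (f : ι → ((Fin n → ℝ) × (Fin m → ℝ) × (Fin p → ℝ)) → (Fin n → ℝ))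
    (g : ι → ((Fin n → ℝ) × (Fin p → ℝ)) → (Fin q → ℝ))
    (h : (Fin n → ℝ) → (Fin m → ℝ))
    (A : ι → Matrix (Fin n) (Fin n) ℝ)
    (B1 : ι → Matrix (Fin n) (Fin m) ℝ)
    (B2 : ι → Matrix (Fin n) (Fin p) ℝ)
    (C : ι → Matrix (Fin q) (Fin n) ℝ)
    (D : ι → Matrix (Fin q) (Fin p) ℝ)
    (H : Matrix (Fin m) (Fin n) ℝ)
    (P : Matrix (Fin n) (Fin n) ℝ)
    (Q : ι → Matrix (Fin q) (Fin q) ℝ)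
    (S : ι → Matrix (Fin q) (Fin p) ℝ)
    (R : ι → Matrix (Fin p) (Fin p) ℝ)
    (hf0 : ∀ j, f j (0, 0, 0) = 0)
    (hg0 : ∀ j, g j (0, 0) = 0)
    (hh0 : h 0 = 0)
    (hdf : ∀ j, HasFDerivAt (f j)
      ((mulVecCLM (A j)).comp
          (ContinuousLinearMap.fst ℝ (Fin n → ℝ) ((Fin m → ℝ) × (Fin p → ℝ)))
        + (mulVecCLM (B1 j)).comp
          ((ContinuousLinearMap.fst ℝ (Fin m → ℝ) (Fin p → ℝ)).comp
            (ContinuousLinearMap.snd ℝ (Fin n → ℝ) ((Fin m → ℝ) × (Fin p → ℝ))))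
        + (mulVecCLM (B2 j)).comp
          ((ContinuousLinearMap.snd ℝ (Fin m → ℝ) (Fin p → ℝ)).comp
            (ContinuousLinearMap.snd ℝ (Fin n → ℝ) ((Fin m → ℝ) × (Fin p → ℝ)))))
      (0, 0, 0))
    (hdg : ∀ j, HasFDerivAt (g j)
      ((mulVecCLM (C j)).comp
          (ContinuousLinearMap.fst ℝ (Fin n → ℝ) (Fin p → ℝ))
        + (mulVecCLM (D j)).comp
          (ContinuousLinearMap.snd ℝ (Fin n → ℝ) (Fin p → ℝ)))
      (0, 0))
    (hdh : HasFDerivAt h (mulVecCLM H) 0)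
    (hP : P.PosDef)
    (hQsym : ∀ j, (Q j).IsSymm)
    (hRsym : ∀ j, (R j).IsSymm)
    (hΓ : ∀ j, (dissipationMatrix P (A j + B1 j * H) (B2 j) (C j) (D j)
      (Q j) (S j) (R j)).PosDef) :
    ∃ ε > (0:ℝ), ∀ (j : ι) (x : Fin n → ℝ) (w : Fin p → ℝ),
      ‖x‖ < ε → ‖w‖ < ε →
      g j (x, w) ⬝ᵥ (Q j *ᵥ g j (x, w)) + 2 * (g j (x, w) ⬝ᵥ (S j *ᵥ w))
        + w ⬝ᵥ (R j *ᵥ w)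
      ≥ 2 * (x ⬝ᵥ (P *ᵥ f j (x, h x, w))) := by
  classical
  have hPsym : P.IsSymm := posdef_isSymm hP
  have hy : ∀ j, (fun z : (Fin n → ℝ) × (Fin p → ℝ) =>
      g j z - (C j *ᵥ z.1 + D j *ᵥ z.2)) =o[nhds 0] fun z => z := by
    intro j
    have h1 := (hdg j).isLittleO
    simp only [hg0 j, Prod.mk_zero_zero, sub_zero] at h1
    refine h1.congr (fun z => ?_) (fun z => rfl)
    simp [ContinuousLinearMap.add_apply, ContinuousLinearMap.comp_apply,
      ContinuousLinearMap.coe_fst', ContinuousLinearMap.coe_snd', mulVecCLM_apply,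
      show g j 0 = 0 from hg0 j]
  have hu : ∀ j, (fun z : (Fin n → ℝ) × (Fin p → ℝ) =>
      f j (z.1, h z.1, z.2) - ((A j + B1 j * H) *ᵥ z.1 + B2 j *ᵥ z.2))
        =o[nhds 0] fun z => z := by
    intro j
    have hh1 : HasFDerivAt (fun z : (Fin n → ℝ) × (Fin p → ℝ) => h z.1)
        ((mulVecCLM H).comp (ContinuousLinearMap.fst ℝ (Fin n → ℝ) (Fin p → ℝ)))
        0 := hdh.comp (0 : (Fin n → ℝ) × (Fin p → ℝ)) hasFDerivAt_fst
    have hψ : HasFDerivAt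
        (fun z : (Fin n → ℝ) × (Fin p → ℝ) => (z.1, h z.1, z.2))
        ((ContinuousLinearMap.fst ℝ (Fin n → ℝ) (Fin p → ℝ)).prod
          (((mulVecCLM H).comp (ContinuousLinearMap.fst ℝ (Fin n → ℝ) (Fin p → ℝ))).prod
            (ContinuousLinearMap.snd ℝ (Fin n → ℝ) (Fin p → ℝ)))) 0 :=
      HasFDerivAt.prodMk hasFDerivAt_fst (HasFDerivAt.prodMk hh1 hasFDerivAt_snd)
    have hdf' : HasFDerivAt (f j)
        ((mulVecCLM (A j)).comp
            (ContinuousLinearMap.fst ℝ (Fin n → ℝ) ((Fin m → ℝ) × (Fin p → ℝ)))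
          + (mulVecCLM (B1 j)).comp
            ((ContinuousLinearMap.fst ℝ (Fin m → ℝ) (Fin p → ℝ)).comp
              (ContinuousLinearMap.snd ℝ (Fin n → ℝ) ((Fin m → ℝ) × (Fin p → ℝ))))
          + (mulVecCLM (B2 j)).comp
            ((ContinuousLinearMap.snd ℝ (Fin m → ℝ) (Fin p → ℝ)).comp
              (ContinuousLinearMap.snd ℝ (Fin n → ℝ) ((Fin m → ℝ) × (Fin p → ℝ)))))
        ((0 : Fin n → ℝ), h 0, (0 : Fin p → ℝ)) := by
      rw [hh0]; exact hdf j
    have hcomp := hdf'.comp (0 : (Fin n → ℝ) × (Fin p → ℝ)) hψ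
    have h1 := hcomp.isLittleO
    simp only [Function.comp] at h1
    simp only [Prod.fst_zero, Prod.snd_zero, hh0, hf0 j, Prod.mk_zero_zero, sub_zero] at h1
    refine h1.congr (fun z => ?_) (fun z => rfl)
    simp only [ContinuousLinearMap.add_apply, ContinuousLinearMap.comp_apply,
      ContinuousLinearMap.coe_fst', ContinuousLinearMap.coe_snd',
      ContinuousLinearMap.prod_apply, mulVecCLM_apply,
      Matrix.add_mulVec, Matrix.mulVec_mulVec, show f j 0 = 0 from hf0 j]
    abel_nf
  have hall : ∀ᶠ z : (Fin n → ℝ) × (Fin p → ℝ) in nhds 0, ∀ j : ι,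
      2 * (z.1 ⬝ᵥ (P *ᵥ f j (z.1, h z.1, z.2))) ≤
      g j z ⬝ᵥ (Q j *ᵥ g j z) + 2 * (g j z ⬝ᵥ (S j *ᵥ z.2)) + z.2 ⬝ᵥ (R j *ᵥ z.2) := by
    rw [Filter.eventually_all]
    intro j
    exact single_mode hPsym (hQsym j) (hy j) (hu j) (hΓ j)
  obtain ⟨ε, hε, hball⟩ := Metric.eventually_nhds_iff_ball.1 hall
  refine ⟨ε, hε, fun j x w hx hw => ?_⟩
  have hmem : ((x, w) : (Fin n → ℝ) × (Fin p → ℝ)) ∈ Metric.ball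
      (0 : (Fin n → ℝ) × (Fin p → ℝ)) ε := by
    rw [Metric.mem_ball, dist_zero_right]
    simpa [Prod.norm_def] using max_lt hx hw
  exact hball _ hmem j
end

section
/- Let Σ be a finite set of modes and, for each j ∈ Σ, let γ_j ≥ 0 be a scalar robustness margin. Suppose that for every j ∈ Σ: (i) the perturbed design LMI matrix M̂_j, obtained from the design LMI matrix M_j by replacing its (1,1) block M₁₁ with M₁₁ − 2γ_jP, is positive definite; (ii) P B¹_j = B¹_j V_j with V_j ∈ ℝ^{m×m} invertible; and set K_j = V_j⁻¹U_j. Then for every perturbation ΔĤ ∈ ℝ^{m×n} satisfying the Loewner-order bounds −2γ_jP ⪯ P B¹_jΔĤ + (B¹_jΔĤ)'P ⪯ 2γ_jP for all j ∈ Σ, and writing H_new = H − ΔĤ, the design LMI matrix built with H_new in place of H is positive definite for every j, and consequently the closed-loop dissipation matrix Γ_j formed with Â_j = A_j + B¹_jH_new + B¹_jK_jC_j and B̂_j = B²_j + B¹_jK_jD_j is positive definite for every j ∈ Σ; i.e., the same fixed controller gains K_j render the closed-loop linearized switched system QSR-state strictly input dissipative (with storage V(x) = x'Px) for every new network topology whose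 Jacobian perturbation obeys these bounds. -/
open Matrix

lemma psd_fromBlocks_embed {a b : Type*} [Fintype a] [Fintype b]
    {W : Matrix a a ℝ} (hW : W.PosSemidef) :
    (Matrix.fromBlocks W 0 0 (0 : Matrix b b ℝ)).PosSemidef := by
  rw [Matrix.posSemidef_iff_dotProduct_mulVec]
  constructor
  · unfold Matrix.IsHermitian
    rw [Matrix.fromBlocks_conjTranspose]
    simpa using hW.1.eq
  · intro x
    have h := hW.dotProduct_mulVec_nonneg (x ∘ Sum.inl)
    simpa [Matrix.fromBlocks_mulVec, Matrix.dotProduct_block] using h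

lemma posDef_transpose_mul_mul {a b : Type*} [Fintype a] [Fintype b]
    {M : Matrix a a ℝ} (hM : M.PosDef) (B : Matrix a b ℝ)
    (hB : ∀ x, B *ᵥ x = 0 → x = 0) : (Bᵀ * M * B).PosDef := by
  have hBt : Bᵀ = Bᴴ := by ext i j; simp [Matrix.conjTranspose_apply]
  rw [hBt]
  exact Matrix.PosDef.of_dotProduct_mulVec_pos (Matrix.isHermitian_conjTranspose_mul_mul B hM.1) fun x hx => by
    simpa only [Matrix.star_mulVec, Matrix.dotProduct_mulVec, Matrix.vecMul_vecMul] using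
      hM.dotProduct_mulVec_pos (x := B *ᵥ x) (fun h => hx (hB x h))

lemma fromBlocks_sub' {α n' m' o' l' : Type*} [Sub α] (A : Matrix n' l' α) (B : Matrix n' m' α)
    (C : Matrix o' l' α) (D : Matrix o' m' α) (A' : Matrix n' l' α) (B' : Matrix n' m' α)
    (C' : Matrix o' l' α) (D' : Matrix o' m' α) :
    Matrix.fromBlocks A B C D - Matrix.fromBlocks A' B' C' D' =
      Matrix.fromBlocks (A - A') (B - B') (C - C') (D - D') := by
  ext i j; rcases i with _ | _ <;> rcases j with _ | _ <;> rfl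

/-- Suppose for every mode j the perturbed design LMI matrix
M̂_j (M_j with its (1,1) block replaced by M₁₁ − 2γ_jP) is positive definite
and P B¹_j = B¹_j V_j with V_j invertible; set K_j = V_j⁻¹U_j. Then for every
perturbation ΔĤ with −2γ_jP ⪯ P B¹_jΔĤ + (B¹_jΔĤ)'P ⪯ 2γ_jP for all j, and
H_new = H − ΔĤ, the design LMI matrix built with H_new is positive definite,
and consequently the closed-loop dissipation matrix with
Â_j = A_j + B¹_jH_new + B¹_jK_jC_j, B̂_j = B²_j + B¹_jK_jD_j is positive
definite for every j. -/
theorem robust_design_LMI_topology_change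
    {n m p q : ℕ} {ι : Type*} [Fintype ι]
    (P : Matrix (Fin n) (Fin n) ℝ)
    (A : ι → Matrix (Fin n) (Fin n) ℝ)
    (B1 : ι → Matrix (Fin n) (Fin m) ℝ)
    (B2 : ι → Matrix (Fin n) (Fin p) ℝ)
    (C : ι → Matrix (Fin q) (Fin n) ℝ)
    (D : ι → Matrix (Fin q) (Fin p) ℝ)
    (H : Matrix (Fin m) (Fin n) ℝ)
    (U : ι → Matrix (Fin m) (Fin q) ℝ)
    (V : ι → Matrix (Fin m) (Fin m) ℝ)
    (Q : ι → Matrix (Fin q) (Fin q) ℝ)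
    (S : ι → Matrix (Fin q) (Fin p) ℝ)
    (R : ι → Matrix (Fin p) (Fin p) ℝ)
    (L : ι → Matrix (Fin q) (Fin q) ℝ)
    (γ : ι → ℝ)
    (hγ : ∀ j, 0 ≤ γ j)
    (hP : P.PosDef)
    (hQsym : ∀ j, (Q j).IsSymm)
    (hQneg : ∀ j, (-(Q j)).PosDef)
    (hRsym : ∀ j, (R j).IsSymm)
    (hLsym : ∀ j, (L j).IsSymm)
    (hLL : ∀ j, L j * L j = -(Q j))
    (hMhat : ∀ j,
      (designLMI P (A j) (B1 j) (B2 j) (C j) (D j) H (U j) (S j) (R j) (L j)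
        - Matrix.fromBlocks ((2 * γ j) • P) 0 0 0).PosDef)
    (hPB : ∀ j, P * B1 j = B1 j * V j)
    (hV : ∀ j, IsUnit (V j)) :
    ∀ ΔH : Matrix (Fin m) (Fin n) ℝ,
      (∀ j, ((2 * γ j) • P - (P * (B1 j * ΔH) + (B1 j * ΔH)ᵀ * P)).PosSemidef ∧
        ((P * (B1 j * ΔH) + (B1 j * ΔH)ᵀ * P) + (2 * γ j) • P).PosSemidef) →
      ∀ j,
        (designLMI P (A j) (B1 j) (B2 j) (C j) (D j) (H - ΔH) (U j) (S j)
          (R j) (L j)).PosDef ∧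
        (dissipationMatrix P
          (A j + B1 j * (H - ΔH) + B1 j * ((V j)⁻¹ * U j) * C j)
          (B2 j + B1 j * ((V j)⁻¹ * U j) * D j)
          (C j) (D j) (Q j) (S j) (R j)).PosDef := by
  intro ΔH hΔ j
  have hVdet : IsUnit (V j).det := (Matrix.isUnit_iff_isUnit_det _).mp (hV j)
  have hVV : V j * (V j)⁻¹ = 1 := Matrix.mul_nonsing_inv _ hVdet
  have hPsym : Pᵀ = P := by simpa using hP.1.eq
  have hLsym' : (L j)ᵀ = L j := hLsym j
  have hQsym' : (Q j)ᵀ = Q j := hQsym j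
  -- Part 1
  have hsplit : designLMI P (A j) (B1 j) (B2 j) (C j) (D j) (H - ΔH) (U j) (S j) (R j) (L j)
      = (designLMI P (A j) (B1 j) (B2 j) (C j) (D j) H (U j) (S j) (R j) (L j)
          - Matrix.fromBlocks ((2 * γ j) • P) 0 0 0)
        + Matrix.fromBlocks (P * (B1 j * ΔH) + (B1 j * ΔH)ᵀ * P + (2 * γ j) • P) 0 0 0 := by
    unfold designLMI
    rw [fromBlocks_sub', Matrix.fromBlocks_add, Matrix.fromBlocks_inj]
    refine ⟨?_, by simp, by simp, by simp⟩
    simp only [Matrix.mul_sub, Matrix.sub_mul, Matrix.mul_add, Matrix.add_mul,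
      Matrix.transpose_sub, Matrix.transpose_add, Matrix.transpose_mul, Matrix.mul_assoc]
    abel
  have h1 : (designLMI P (A j) (B1 j) (B2 j) (C j) (D j) (H - ΔH) (U j) (S j)
      (R j) (L j)).PosDef := by
    rw [hsplit]
    exact (hMhat j).add_posSemidef (psd_fromBlocks_embed (hΔ j).2)
  refine ⟨h1, ?_⟩
  -- Part 2
  have hPBV : ∀ {k : Type} [Fintype k] (X : Matrix (Fin m) k ℝ),
      P * (B1 j * ((V j)⁻¹ * X)) = B1 j * X := by
    intro k _ X
    rw [← Matrix.mul_assoc, hPB j, Matrix.mul_assoc, ← Matrix.mul_assoc (V j), hVV,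
      Matrix.one_mul]
  have hVBP : ((V j)⁻¹)ᵀ * ((B1 j)ᵀ * P) = (B1 j)ᵀ := by
    have hBP : (B1 j)ᵀ * P = (V j)ᵀ * (B1 j)ᵀ := by
      have := congrArg Matrix.transpose (hPB j)
      simp only [Matrix.transpose_mul, hPsym] at this
      exact this
    rw [hBP, ← Matrix.mul_assoc, ← Matrix.transpose_mul, hVV, Matrix.transpose_one,
      Matrix.one_mul]
  have hLL2 : ∀ {k : Type} [Fintype k] (X : Matrix (Fin q) k ℝ),
      L j * (L j * X) = -(Q j * X) := by
    intro k _ X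
    rw [← Matrix.mul_assoc, hLL j, Matrix.neg_mul]
  -- the congruence matrix
  set E : Matrix (Fin n ⊕ (Fin p ⊕ Fin q)) (Fin n ⊕ Fin p) ℝ :=
    Matrix.fromBlocks 1 0 (Matrix.fromRows 0 (L j * C j)) (Matrix.fromRows 1 (L j * D j))
    with hEdef
  have hGE : Matrix.fromBlocks (1 : Matrix (Fin n) (Fin n) ℝ)
      (Matrix.fromCols (0 : Matrix (Fin n) (Fin p) ℝ) (0 : Matrix (Fin n) (Fin q) ℝ))
      (0 : Matrix (Fin p) (Fin n) ℝ)
      (Matrix.fromCols (1 : Matrix (Fin p) (Fin p) ℝ) (0 : Matrix (Fin p) (Fin q) ℝ))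
      * E = 1 := by
    rw [hEdef, Matrix.fromBlocks_multiply]
    simp [Matrix.fromCols_mul_fromRows, Matrix.fromBlocks_one]
  have hEinj : ∀ x, E *ᵥ x = 0 → x = 0 := by
    intro x hx
    have h := congrArg (fun M => M *ᵥ x) hGE
    simpa [← Matrix.mulVec_mulVec, hx] using h.symm
  have hE : Eᵀ * designLMI P (A j) (B1 j) (B2 j) (C j) (D j) (H - ΔH) (U j) (S j)
        (R j) (L j) * E
      = dissipationMatrix P
          (A j + B1 j * (H - ΔH) + B1 j * ((V j)⁻¹ * U j) * C j)
          (B2 j + B1 j * ((V j)⁻¹ * U j) * D j)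
          (C j) (D j) (Q j) (S j) (R j) := by
    rw [hEdef]
    unfold designLMI dissipationMatrix
    simp only [Matrix.fromBlocks_transpose, Matrix.transpose_fromRows,
      Matrix.transpose_fromCols, Matrix.transpose_zero, Matrix.transpose_one,
      Matrix.fromBlocks_multiply, Matrix.fromCols_mul_fromRows,
      Matrix.fromCols_mul_fromBlocks, Matrix.fromBlocks_mul_fromRows,
      Matrix.fromRows_mul, Matrix.mul_fromCols, Matrix.mul_add, Matrix.add_mul,
      mul_add, add_mul, Matrix.mul_one, Matrix.one_mul, Matrix.mul_zero, Matrix.zero_mul,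
      mul_one, one_mul, mul_zero, zero_mul, add_zero, zero_add, Matrix.fromBlocks_inj]
    refine ⟨?_, ?_, ?_, ?_⟩ <;>
    · simp only [Matrix.transpose_sub, Matrix.transpose_add, Matrix.transpose_neg,
        Matrix.transpose_mul, Matrix.transpose_transpose, hPsym, hLsym', hQsym',
        Matrix.mul_sub, Matrix.sub_mul, Matrix.mul_add, Matrix.add_mul,
        Matrix.neg_mul, Matrix.mul_neg, Matrix.mul_assoc, hPBV, hVBP, hLL2]
      abel
  have h2 := posDef_transpose_mul_mul h1 E hEinj
  rw [hE] at h2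
  exact h2
end
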